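/- arXiv:2009.14377 — 2 statements merged into one kernel-verified Lean document; each statement's English description precedes it below -/
import Mathlib

section
/- Let n ≥ 2 and let A = (a_ij) be an (n+1)×(n+1) generalized Cartan matrix whose principal submatrix on the indices {1,…,n} is of type N_{n-1,n}. Then A is of type N_{n,n+1} if and only if the entries in the added row and column are not all zero and for each j ∈ {1,…,n} the pair (a_{n+1,j}, a_{j,n+1}) falls into one of the following cases: (0,0); (−1,−1); a_{n+1,j} = −1 and a_{j,n+1} ∈ {−2,−3,−4} (or symmetrically a_{j,n+1} = −1 and a_{n+1,j} ∈ {−2,−3,−4}); or (−2,−2). Equivalently, each 2×2 principal submatrix on indices {j, n+1} must be of finite or affine type, i.e., a_{n+1,j}·a_{j,n+1} ≤ 4. -/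
/-- An `n × n` integer matrix is a generalized Cartan matrix (GCM). -/
def IsGCM {n : ℕ} (A : Matrix (Fin n) (Fin n) ℤ) : Prop :=
  (∀ i, A i i = 2) ∧ (∀ i j, i ≠ j → A i j ≤ 0) ∧ (∀ i j, A i j = 0 → A j i = 0)

/-- The graph on the index set of `A`, with an edge between `i ≠ j` whenever
`A i j ≠ 0` (stated symmetrically so as to be well-defined for all matrices;
for a GCM, `A i j ≠ 0 ↔ A j i ≠ 0`). -/
def gcmGraph {n : ℕ} (A : Matrix (Fin n) (Fin n) ℤ) : SimpleGraph (Fin n) where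
  Adj i j := i ≠ j ∧ (A i j ≠ 0 ∨ A j i ≠ 0)
  symm := ⟨fun i j h => ⟨h.1.symm, h.2.symm⟩⟩
  loopless := ⟨fun i h => h.1 rfl⟩

attribute [reducible] gcmGraph

/-- A matrix is indecomposable (its diagram is connected). -/
def IsIndecomposable {n : ℕ} (A : Matrix (Fin n) (Fin n) ℤ) : Prop :=
  (gcmGraph A).Connected

/-- An indecomposable GCM is of finite type: there is `u > 0` with `A ⬝ u > 0`. -/
def IsFinType {n : ℕ} (A : Matrix (Fin n) (Fin n) ℤ) : Prop :=
  IsGCM A ∧ IsIndecomposable A ∧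
    ∃ u : Fin n → ℚ, (∀ i, 0 < u i) ∧ (∀ i, 0 < ∑ j, (A i j : ℚ) * u j)

/-- An indecomposable GCM is of affine type: there is `u > 0` with `A ⬝ u = 0`. -/
def IsAffType {n : ℕ} (A : Matrix (Fin n) (Fin n) ℤ) : Prop :=
  IsGCM A ∧ IsIndecomposable A ∧
    ∃ u : Fin n → ℚ, (∀ i, 0 < u i) ∧ (∀ i, ∑ j, (A i j : ℚ) * u j = 0)

/-- An indecomposable GCM is of indefinite type: there is `u > 0` with `A ⬝ u < 0`. -/
def IsIndefType {n : ℕ} (A : Matrix (Fin n) (Fin n) ℤ) : Prop :=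
  IsGCM A ∧ IsIndecomposable A ∧
    ∃ u : Fin n → ℚ, (∀ i, 0 < u i) ∧ (∀ i, ∑ j, (A i j : ℚ) * u j < 0)

/-- `B` is a principal submatrix of `A`: the restriction of `A` to a subset of
its index set (encoded by a strictly monotone map `Fin m → Fin n`). -/
def IsPrincipalSubmatrix {m n : ℕ} (B : Matrix (Fin m) (Fin m) ℤ)
    (A : Matrix (Fin n) (Fin n) ℤ) : Prop :=
  ∃ f : Fin m → Fin n, StrictMono f ∧ B = A.submatrix f f

/-- A proper principal submatrix: the corresponding subset is nonempty and proper. -/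
def IsProperPrincipalSubmatrix {m n : ℕ} (B : Matrix (Fin m) (Fin m) ℤ)
    (A : Matrix (Fin n) (Fin n) ℤ) : Prop :=
  IsPrincipalSubmatrix B A ∧ 0 < m ∧ m < n

/-- A GCM is of hyperbolic type: indecomposable, neither finite nor affine,
and every proper connected principal submatrix is of finite or affine type. -/
def IsHypType {n : ℕ} (A : Matrix (Fin n) (Fin n) ℤ) : Prop :=
  IsGCM A ∧ IsIndecomposable A ∧ ¬ IsFinType A ∧ ¬ IsAffType A ∧
    ∀ m, ∀ B : Matrix (Fin m) (Fin m) ℤ,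
      IsProperPrincipalSubmatrix B A → IsIndecomposable B →
        (IsFinType B ∨ IsAffType B)

/-- `N₀` = finite type, `N₁` = affine type, `N₂` = hyperbolic type; for `k ≥ 3`,
a GCM is of type `N_k` if it has a proper principal submatrix of type `N_{k-1}`
and every proper connected principal submatrix is of type `N_m` for some `m < k`. -/
def IsNType : (k : ℕ) → {n : ℕ} → Matrix (Fin n) (Fin n) ℤ → Prop
  | 0, _, A => IsFinType A
  | 1, _, A => IsAffType A
  | 2, _, A => IsHypType A
  | (k+3), _, A => IsGCM A ∧ IsIndecomposable A ∧
      (∃ m, ∃ B : Matrix (Fin m) (Fin m) ℤ,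
        IsProperPrincipalSubmatrix B A ∧ IsNType (k+2) B) ∧
      (∀ m, ∀ B : Matrix (Fin m) (Fin m) ℤ,
        IsProperPrincipalSubmatrix B A → IsIndecomposable B →
          ∃ m', ∃ _ : m' < k + 3, IsNType m' B)
  termination_by k => k

set_option linter.unusedVariables false
set_option maxHeartbeats 1000000

section Basics

open Finset

variable {N m n : ℕ}

lemma gcm_submatrix {A : Matrix (Fin N) (Fin N) ℤ} (hA : IsGCM A)
    {f : Fin m → Fin N} (hf : Function.Injective f) : IsGCM (A.submatrix f f) := by
  obtain ⟨h1, h2, h3⟩ := hA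
  exact ⟨fun i => h1 _, fun i j hij => h2 _ _ (fun h => hij (hf h)),
    fun i j h => h3 _ _ h⟩

lemma ntype_gcm_indec {k : ℕ} {M : Matrix (Fin m) (Fin m) ℤ} (h : IsNType k M) :
    IsGCM M ∧ IsIndecomposable M := by
  match k with
  | 0 => rw [IsNType] at h; exact ⟨h.1, h.2.1⟩
  | 1 => rw [IsNType] at h; exact ⟨h.1, h.2.1⟩
  | 2 => rw [IsNType] at h; exact ⟨h.1, h.2.1⟩
  | (k+3) => rw [IsNType] at h; exact ⟨h.1, h.2.1⟩

lemma one_dim_fin {M : Matrix (Fin 1) (Fin 1) ℤ} (h : M 0 0 = 2) : IsFinType M := by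
  refine ⟨⟨fun i => by fin_cases i; exact h, fun i j hij => absurd (Subsingleton.elim i j) hij,
      fun i j hz => by fin_cases i; fin_cases j; exact hz⟩,
    SimpleGraph.Connected.mk (fun u v => by rw [Subsingleton.elim u v]),
    fun _ => 1, fun i => one_pos, ?_⟩
  intro i
  fin_cases i
  simp [h]

lemma pair_conn {B : Matrix (Fin 2) (Fin 2) ℤ} (h : B 0 1 ≠ 0 ∨ B 1 0 ≠ 0) :
    IsIndecomposable B := by
  have hadj : (gcmGraph B).Adj 0 1 := ⟨by decide, h⟩
  constructor
  intro u v
  fin_cases u <;> fin_cases v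
  · rfl
  · exact hadj.reachable
  · exact hadj.symm.reachable
  · rfl

lemma not_pair_conn {B : Matrix (Fin 2) (Fin 2) ℤ} (h1 : B 0 1 = 0) (h2 : B 1 0 = 0) :
    ¬ IsIndecomposable B := by
  intro hc
  obtain ⟨w⟩ := hc.preconnected 0 1
  cases w with
  | cons hadj p =>
    obtain ⟨hne, hor⟩ := hadj
    rename_i b
    fin_cases b
    · exact hne rfl
    · rcases hor with h | h <;> simp_all

lemma strictMono_fin_id {f : Fin n → Fin n} (h : StrictMono f) : ∀ i, f i = i := by
  have hs : Function.Surjective f := Finite.injective_iff_surjective.mp h.injective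
  have := (h.range_inj strictMono_id).mp
    (by rw [Set.range_id, Set.range_eq_univ]; exact hs)
  exact fun i => congrFun this i

end Basics
section TwoByTwo

open Finset

variable {B : Matrix (Fin 2) (Fin 2) ℤ}

lemma pair_fin_or_aff (hB : IsGCM B) (hc : IsIndecomposable B)
    (h4 : B 0 1 * B 1 0 ≤ 4) : IsFinType B ∨ IsAffType B := by
  have h00 : B 0 0 = 2 := hB.1 0
  have h11 : B 1 1 = 2 := hB.1 1
  have hx : B 0 1 ≤ 0 := hB.2.1 0 1 (by decide)
  have hy : B 1 0 ≤ 0 := hB.2.1 1 0 (by decide)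
  by_cases hx0 : B 0 1 = 0
  · exact absurd hc (not_pair_conn hx0 (hB.2.2 0 1 hx0))
  have hy0 : B 1 0 ≠ 0 := fun h => hx0 (hB.2.2 1 0 h)
  have hxneg : B 0 1 ≤ -1 := by omega
  have hyneg : B 1 0 ≤ -1 := by omega
  set a : ℚ := ((-(B 0 1) : ℤ) : ℚ) with ha_def
  set b : ℚ := ((-(B 1 0) : ℤ) : ℚ) with hb_def
  have ha1 : 1 ≤ a := by rw [ha_def]; exact_mod_cast by omega
  have hb1 : 1 ≤ b := by rw [hb_def]; exact_mod_cast by omega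
  have hab4 : a * b ≤ 4 := by
    have h4q : ((B 0 1 * B 1 0 : ℤ) : ℚ) ≤ 4 := by exact_mod_cast h4
    rw [ha_def, hb_def]; push_cast at h4q ⊢; nlinarith [h4q]
  have hxq : (B 0 1 : ℚ) = -a := by rw [ha_def]; push_cast; ring
  have hyq : (B 1 0 : ℚ) = -b := by rw [hb_def]; push_cast; ring
  by_cases heq : B 0 1 * B 1 0 = 4
  · -- affine
    have hab : a * b = 4 := by
      have h4q : ((B 0 1 * B 1 0 : ℤ) : ℚ) = 4 := by exact_mod_cast heq
      rw [ha_def, hb_def]; push_cast at h4q ⊢; nlinarith [h4q]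
    right
    refine ⟨hB, hc, ![a, 2], fun i => by fin_cases i <;> simp <;> linarith, ?_⟩
    intro i
    fin_cases i <;>
      simp [Fin.sum_univ_two, h00, h11, hxq, hyq] <;> push_cast <;> nlinarith [hab]
  · -- finite
    have hab3 : a * b ≤ 3 := by
      have : B 0 1 * B 1 0 ≤ 3 := by
        have h4' : B 0 1 * B 1 0 < 4 := lt_of_le_of_ne h4 heq
        linarith [Int.lt_iff_add_one_le.mp h4']
      have h4q : ((B 0 1 * B 1 0 : ℤ) : ℚ) ≤ 3 := by exact_mod_cast this
      rw [ha_def, hb_def]; push_cast at h4q ⊢; nlinarith [h4q]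
    left
    have ha0 : 0 < a := by linarith
    set t : ℚ := (b / 2 + 2 / a) / 2 with ht_def
    have htb : b / 2 < t := by
      rw [ht_def]
      have h1 : a * (2 * ((b / 2 + 2 / a) / 2) - b) = 2 - a * b / 2 := by
        field_simp; ring
      have h2 : 0 < a * (2 * ((b / 2 + 2 / a) / 2) - b) := by rw [h1]; linarith
      nlinarith [h2, ha0]
    have hta : a * t = a * b / 4 + 1 := by
      rw [ht_def]; field_simp; ring
    have htpos : 0 < t := by linarith
    refine ⟨hB, hc, ![1, t], fun i => by fin_cases i <;> simp <;> linarith, ?_⟩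
    intro i
    fin_cases i <;> simp [Fin.sum_univ_two, h00, h11, hxq, hyq]
    · nlinarith [hta, hab3]
    · nlinarith [htb]

lemma pair_prod_le_four (hB : IsGCM B) (h : IsFinType B ∨ IsAffType B) :
    B 0 1 * B 1 0 ≤ 4 := by
  have h00 : B 0 0 = 2 := hB.1 0
  have h11 : B 1 1 = 2 := hB.1 1
  have hx : B 0 1 ≤ 0 := hB.2.1 0 1 (by decide)
  have hy : B 1 0 ≤ 0 := hB.2.1 1 0 (by decide)
  by_contra hgt
  push_neg at hgt
  have hxneg : (B 0 1 : ℚ) < 0 := by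
    have : B 0 1 ≠ 0 := by intro h0; rw [h0] at hgt; simp at hgt
    exact_mod_cast lt_of_le_of_ne hx this
  have hyneg : (B 1 0 : ℚ) < 0 := by
    have : B 1 0 ≠ 0 := by intro h0; rw [h0] at hgt; simp at hgt
    exact_mod_cast lt_of_le_of_ne hy this
  have hq : (4 : ℚ) < (B 0 1 : ℚ) * (B 1 0 : ℚ) := by exact_mod_cast hgt
  rcases h with ⟨_, _, u, hu, hs⟩ | ⟨_, _, u, hu, hs⟩
  · have s0 := hs 0
    have s1 := hs 1
    rw [Fin.sum_univ_two] at s0 s1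
    rw [show ((B 0 0 : ℚ)) = 2 by exact_mod_cast h00] at s0
    rw [show ((B 1 1 : ℚ)) = 2 by exact_mod_cast h11] at s1
    have h1 : (B 1 0 : ℚ) * ((2:ℚ) * u 0 + (B 0 1:ℚ) * u 1) < 0 :=
      mul_neg_of_neg_of_pos hyneg s0
    nlinarith [mul_lt_mul_of_pos_right hq (hu 1), s1, hu 0, hu 1]
  · have s0 := hs 0
    have s1 := hs 1
    rw [Fin.sum_univ_two] at s0 s1
    rw [show ((B 0 0 : ℚ)) = 2 by exact_mod_cast h00] at s0
    rw [show ((B 1 1 : ℚ)) = 2 by exact_mod_cast h11] at s1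
    have key : ((B 0 1:ℚ) * (B 1 0:ℚ) - 4) * u 1 = 0 := by
      linear_combination (B 1 0 : ℚ) * s0 - 2 * s1
    rcases mul_eq_zero.mp key with h | h
    · nlinarith [hq]
    · exact absurd h (ne_of_gt (hu 1))

lemma pair_hyp_prod (h : IsHypType B) : 4 < B 0 1 * B 1 0 := by
  obtain ⟨hgcm, hconn, hnfin, hnaff, _⟩ := h
  by_contra hle
  push_neg at hle
  rcases pair_fin_or_aff hgcm hconn hle with h | h
  · exact hnfin h
  · exact hnaff h

end TwoByTwo
section Key

open Finset

variable {N m : ℕ}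

lemma exists_adj_cut {V : Type*} {G : SimpleGraph V} (S : Set V) :
    ∀ {a b : V}, G.Walk a b → a ∈ S → b ∉ S → ∃ x y, x ∈ S ∧ y ∉ S ∧ G.Adj x y
  | _, _, SimpleGraph.Walk.nil, ha, hb => absurd ha hb
  | _, _, SimpleGraph.Walk.cons (v := v) h p, ha, hb => by
      by_cases hv : v ∈ S
      · exact exists_adj_cut S p hv hb
      · exact ⟨_, v, ha, hv, h⟩

lemma key_lemma {B : Matrix (Fin m) (Fin m) ℤ} (hB : IsGCM B) (hc : IsIndecomposable B) :
    ∀ c (v : Fin m → ℚ), (∀ i, 0 < v i) → (∀ i, 0 ≤ ∑ j, (B i j : ℚ) * v j) →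
      (∃ i, 0 < ∑ j, (B i j : ℚ) * v j) →
      (Finset.univ.filter (fun i => ∑ j, (B i j : ℚ) * v j = 0)).card = c →
      ∃ u : Fin m → ℚ, (∀ i, 0 < u i) ∧ (∀ i, 0 < ∑ j, (B i j : ℚ) * u j) := by
  intro c
  induction c using Nat.strong_induction_on with
  | _ c ih =>
    intro v hv hnn hpos hcard
    by_cases hZ : (univ.filter fun i => ∑ j, (B i j : ℚ) * v j = 0) = ∅
    · refine ⟨v, hv, fun i => ?_⟩
      have hi : i ∉ (univ.filter fun i => ∑ j, (B i j : ℚ) * v j = 0) := by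
        rw [hZ]; exact notMem_empty i
      rw [mem_filter] at hi
      push_neg at hi
      exact lt_of_le_of_ne (hnn i) (Ne.symm (hi (mem_univ i)))
    · obtain ⟨x0, hx0⟩ := nonempty_iff_ne_empty.mpr hZ
      obtain ⟨i0, hi0⟩ := hpos
      have hx0' : x0 ∈ (↑(univ.filter fun i => ∑ j, (B i j : ℚ) * v j = 0) : Set (Fin m)) := hx0
      have hi0' : i0 ∉ (↑(univ.filter fun i => ∑ j, (B i j : ℚ) * v j = 0) : Set (Fin m)) := by
        simp only [coe_filter, Set.mem_setOf_eq, mem_univ, true_and]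
        exact ne_of_gt hi0
      obtain ⟨w⟩ := hc.preconnected x0 i0
      obtain ⟨x, y, hxS, hyS, hxy⟩ := exists_adj_cut _ w hx0' hi0'
      have hSx : ∑ j, (B x j : ℚ) * v j = 0 := by
        simp only [coe_filter, Set.mem_setOf_eq, mem_univ, true_and] at hxS
        exact hxS
      have hSy : 0 < ∑ j, (B y j : ℚ) * v j := by
        simp only [coe_filter, Set.mem_setOf_eq, mem_univ, true_and] at hyS
        exact lt_of_le_of_ne (hnn y) (Ne.symm hyS)
      have hxyne : x ≠ y := hxy.1
      have hBxy : B x y ≠ 0 := by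
        rcases hxy.2 with h | h
        · exact h
        · exact fun h0 => h (hB.2.2 _ _ h0)
      have hBxyq : (B x y : ℚ) < 0 := by
        have := hB.2.1 x y hxyne
        exact_mod_cast lt_of_le_of_ne this hBxy
      set δ : ℚ := min (v y / 2) ((∑ j, (B y j : ℚ) * v j) / 4) with hδ_def
      have hδpos : 0 < δ := lt_min (by linarith [hv y]) (by linarith)
      set v' : Fin m → ℚ := Function.update v y (v y - δ) with hv'_def
      have hv'pos : ∀ i, 0 < v' i := by
        intro i
        by_cases hi : i = y
        · subst hi
          rw [hv'_def, Function.update_self]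
          have : δ ≤ v i / 2 := min_le_left _ _
          linarith [hv i]
        · rw [hv'_def, Function.update_of_ne hi]
          exact hv i
      have hsum : ∀ i, ∑ j, (B i j : ℚ) * v' j = (∑ j, (B i j : ℚ) * v j) - (B i y : ℚ) * δ := by
        intro i
        have hterm : ∀ j, (B i j : ℚ) * v' j
            = (B i j : ℚ) * v j - (if j = y then (B i y : ℚ) * δ else 0) := by
          intro j
          by_cases hj : j = y
          · subst hj
            rw [hv'_def, Function.update_self, if_pos rfl]; ring
          · rw [hv'_def, Function.update_of_ne hj, if_neg hj]; ring
        rw [Finset.sum_congr rfl (fun j _ => hterm j), Finset.sum_sub_distrib,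
          Finset.sum_ite_eq' univ y (fun _ => (B i y : ℚ) * δ)]
        simp
      have hByy : (B y y : ℚ) = 2 := by exact_mod_cast hB.1 y
      have hS'y : 0 < ∑ j, (B y j : ℚ) * v' j := by
        rw [hsum y, hByy]
        have : δ ≤ (∑ j, (B y j : ℚ) * v j) / 4 := min_le_right _ _
        linarith
      have hS'nn : ∀ i, 0 ≤ ∑ j, (B i j : ℚ) * v' j := by
        intro i
        by_cases hi : i = y
        · subst hi; linarith [hS'y]
        · rw [hsum i]
          have hBiy : (B i y : ℚ) ≤ 0 := by exact_mod_cast hB.2.1 i y hi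
          nlinarith [hnn i, hδpos]
      have hS'x : 0 < ∑ j, (B x j : ℚ) * v' j := by
        rw [hsum x, hSx]
        nlinarith [hBxyq, hδpos]
      have hsubset : (univ.filter fun i => ∑ j, (B i j : ℚ) * v' j = 0)
          ⊆ (univ.filter fun i => ∑ j, (B i j : ℚ) * v j = 0) := by
        intro i hi
        rw [mem_filter] at hi ⊢
        refine ⟨mem_univ i, ?_⟩
        have hiy : i ≠ y := by
          intro h; subst h; exact absurd hi.2 (ne_of_gt hS'y)
        have hBiy : (B i y : ℚ) ≤ 0 := by exact_mod_cast hB.2.1 i y hiy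
        have := hsum i
        rw [hi.2] at this
        nlinarith [hnn i, hδpos, this]
      have hxnot : x ∉ (univ.filter fun i => ∑ j, (B i j : ℚ) * v' j = 0) := by
        rw [mem_filter]
        push_neg
        exact fun _ => ne_of_gt hS'x
      have hxin : x ∈ (univ.filter fun i => ∑ j, (B i j : ℚ) * v j = 0) := by
        rw [mem_filter]; exact ⟨mem_univ x, hSx⟩
      have hlt : (univ.filter fun i => ∑ j, (B i j : ℚ) * v' j = 0).card < c := by
        rw [← hcard]
        exact card_lt_card (Finset.ssubset_iff_of_subset hsubset |>.mpr ⟨x, hxin, hxnot⟩)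
      exact ih _ hlt v' hv'pos hS'nn ⟨y, hS'y⟩ rfl

lemma not_fin_and_aff {M : Matrix (Fin m) (Fin m) ℤ} (hf : IsFinType M) (ha : IsAffType M) :
    False := by
  obtain ⟨hgcm, hconn, u, hu, hs⟩ := hf
  obtain ⟨_, _, w, hw, hw0⟩ := ha
  have hne : Nonempty (Fin m) := hconn.nonempty
  have hne' : (univ : Finset (Fin m)).Nonempty := univ_nonempty
  obtain ⟨i0, _, hi0⟩ := Finset.exists_min_image univ (fun i => u i / w i) hne'
  set t : ℚ := u i0 / w i0 with ht_def
  have htw : ∀ j, t * w j ≤ u j := by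
    intro j
    have := hi0 j (mem_univ j)
    rw [div_le_div_iff₀ (hw i0) (hw j)] at this
    rw [ht_def, div_mul_eq_mul_div, div_le_iff₀ (hw i0)]
    linarith [this]
  have hti0 : u i0 - t * w i0 = 0 := by
    rw [ht_def, div_mul_cancel₀ _ (ne_of_gt (hw i0))]; ring
  have hsum_eq : ∑ j, (M i0 j : ℚ) * (u j - t * w j)
      = (∑ j, (M i0 j : ℚ) * u j) - t * ∑ j, (M i0 j : ℚ) * w j := by
    rw [Finset.mul_sum, ← Finset.sum_sub_distrib]
    exact Finset.sum_congr rfl (fun j _ => by ring)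
  have hpos : 0 < ∑ j, (M i0 j : ℚ) * (u j - t * w j) := by
    rw [hsum_eq, hw0 i0]
    simpa using hs i0
  have hnonpos : ∑ j, (M i0 j : ℚ) * (u j - t * w j) ≤ 0 := by
    apply Finset.sum_nonpos
    intro j _
    by_cases hj : j = i0
    · subst hj; rw [hti0]; simp
    · have h1 : (M i0 j : ℚ) ≤ 0 := by exact_mod_cast hgcm.2.1 i0 j (Ne.symm hj)
      have h2 : 0 ≤ u j - t * w j := by linarith [htw j]
      exact mul_nonpos_of_nonpos_of_nonneg h1 h2
  linarith

lemma sum_sub_split {A : Matrix (Fin N) (Fin N) ℤ} (hA : IsGCM A)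
    {f : Fin m → Fin N} (hf : Function.Injective f) (u : Fin N → ℚ) (i : Fin m) :
    ∑ j : Fin m, ((A.submatrix f f) i j : ℚ) * u (f j)
      = (∑ j' : Fin N, (A (f i) j' : ℚ) * u j')
        - ∑ j' ∈ (univ.image f)ᶜ, (A (f i) j' : ℚ) * u j' := by
  have h1 : ∑ j : Fin m, ((A.submatrix f f) i j : ℚ) * u (f j)
      = ∑ j' ∈ univ.image f, (A (f i) j' : ℚ) * u j' := by
    rw [Finset.sum_image (fun x _ y _ h => hf h)]
    rfl
  rw [h1, eq_sub_iff_add_eq, Finset.sum_add_sum_compl]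

lemma compl_nonpos {A : Matrix (Fin N) (Fin N) ℤ} (hA : IsGCM A)
    {f : Fin m → Fin N} (u : Fin N → ℚ) (hu : ∀ i, 0 < u i) (i : Fin m) :
    ∑ j' ∈ (univ.image f)ᶜ, (A (f i) j' : ℚ) * u j' ≤ 0 := by
  apply Finset.sum_nonpos
  intro j' hj'
  rw [mem_compl] at hj'
  have hne : f i ≠ j' := by
    intro h; exact hj' (by rw [← h]; exact mem_image_of_mem f (mem_univ i))
  have h1 : (A (f i) j' : ℚ) ≤ 0 := by exact_mod_cast hA.2.1 _ _ hne
  exact mul_nonpos_of_nonpos_of_nonneg h1 (le_of_lt (hu j'))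

lemma fin_sub {A : Matrix (Fin N) (Fin N) ℤ} (hA : IsFinType A)
    {f : Fin m → Fin N} (hf : Function.Injective f)
    (hc : IsIndecomposable (A.submatrix f f)) : IsFinType (A.submatrix f f) := by
  obtain ⟨hgcm, _, u, hu, hs⟩ := hA
  refine ⟨gcm_submatrix hgcm hf, hc, fun i => u (f i), fun i => hu _, ?_⟩
  intro i
  rw [sum_sub_split hgcm hf u i]
  linarith [hs (f i), compl_nonpos hgcm u hu (A := A) (f := f) i]

lemma aff_sub_fin {A : Matrix (Fin N) (Fin N) ℤ} (hA : IsAffType A)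
    {f : Fin m → Fin N} (hf : Function.Injective f) (hns : ¬ Function.Surjective f)
    (hc : IsIndecomposable (A.submatrix f f)) : IsFinType (A.submatrix f f) := by
  obtain ⟨hgcm, hconn, u, hu, hs0⟩ := hA
  have hgcm' := gcm_submatrix hgcm hf
  have hnn : ∀ i, 0 ≤ ∑ j, ((A.submatrix f f) i j : ℚ) * u (f j) := by
    intro i
    rw [sum_sub_split hgcm hf u i, hs0 (f i)]
    linarith [compl_nonpos hgcm u hu (A := A) (f := f) i]
  -- find a strictly positive row
  have hne : Nonempty (Fin m) := hc.nonempty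
  obtain ⟨i00⟩ := hne
  unfold Function.Surjective at hns
  push_neg at hns
  obtain ⟨b, hb⟩ := hns
  have hbnot : b ∉ (↑(univ.image f) : Set (Fin N)) := by
    simp only [coe_image, coe_univ, Set.image_univ, Set.mem_range]
    exact fun ⟨i, hi⟩ => hb i hi
  have hain : f i00 ∈ (↑(univ.image f) : Set (Fin N)) := by
    simp only [coe_image, coe_univ, Set.image_univ, Set.mem_range]
    exact ⟨i00, rfl⟩
  obtain ⟨w⟩ := hconn.preconnected (f i00) b
  obtain ⟨x, y, hxS, hyS, hxy⟩ := exists_adj_cut _ w hain hbnot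
  simp only [coe_image, coe_univ, Set.image_univ, Set.mem_range] at hxS hyS
  obtain ⟨i1, hi1⟩ := hxS
  have hAxy : (A x y : ℚ) < 0 := by
    have hne2 : x ≠ y := hxy.1
    have h1 : A x y ≤ 0 := hgcm.2.1 x y hne2
    have h2 : A x y ≠ 0 := by
      rcases hxy.2 with h | h
      · exact h
      · exact fun h0 => h (hgcm.2.2 _ _ h0)
    exact_mod_cast lt_of_le_of_ne h1 h2
  have hymem : y ∈ (univ.image f)ᶜ := by
    rw [mem_compl, mem_image]
    push_neg
    exact fun i _ => fun h => hyS ⟨i, h⟩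
  have hstrict : 0 < ∑ j, ((A.submatrix f f) i1 j : ℚ) * u (f j) := by
    rw [sum_sub_split hgcm hf u i1, hi1, hs0 x]
    have hsplit : ∑ j' ∈ (univ.image f)ᶜ, (A x j' : ℚ) * u j'
        = (A x y : ℚ) * u y + ∑ j' ∈ ((univ.image f)ᶜ).erase y, (A x j' : ℚ) * u j' := by
      exact (Finset.add_sum_erase _ _ hymem).symm
    have hrest : ∑ j' ∈ ((univ.image f)ᶜ).erase y, (A x j' : ℚ) * u j' ≤ 0 := by
      apply Finset.sum_nonpos
      intro j' hj'
      have hj'c : j' ∈ (univ.image f)ᶜ := mem_of_mem_erase hj'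
      rw [mem_compl] at hj'c
      have hne3 : x ≠ j' := by
        intro h
        exact hj'c (by rw [← h, ← hi1]; exact mem_image_of_mem f (mem_univ i1))
      have h1 : (A x j' : ℚ) ≤ 0 := by exact_mod_cast hgcm.2.1 _ _ hne3
      exact mul_nonpos_of_nonpos_of_nonneg h1 (le_of_lt (hu j'))
    nlinarith [hsplit, hrest, mul_neg_of_neg_of_pos hAxy (hu y)]
  obtain ⟨u', hu', hs'⟩ := key_lemma hgcm' hc _ (fun i => u (f i)) (fun i => hu _) hnn
    ⟨i1, hstrict⟩ rfl
  exact ⟨hgcm', hc, u', hu', hs'⟩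

end Key
section NTypeStruct

open Finset

lemma ntype_sub_lt {k m : ℕ} (hk : 2 ≤ k) {M : Matrix (Fin m) (Fin m) ℤ} (h : IsNType k M)
    {m' : ℕ} {B : Matrix (Fin m') (Fin m') ℤ} (hsub : IsProperPrincipalSubmatrix B M)
    (hB : IsIndecomposable B) : ∃ t, t < k ∧ IsNType t B := by
  rcases k with _|_|_|k
  · omega
  · omega
  · rw [IsNType] at h
    rcases h.2.2.2.2 _ _ hsub hB with hf | ha
    · exact ⟨0, by omega, by rw [IsNType]; exact hf⟩
    · exact ⟨1, by omega, by rw [IsNType]; exact ha⟩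
  · rw [IsNType] at h
    obtain ⟨t, ht, hB'⟩ := h.2.2.2 _ _ hsub hB
    exact ⟨t, ht, hB'⟩

lemma not_surj_of_lt {m' m : ℕ} (h : m' < m) (f : Fin m' → Fin m) :
    ¬ Function.Surjective f := by
  intro hs
  have := Fintype.card_le_of_surjective f hs
  simp at this
  omega

lemma ntype_not_fin_aff : ∀ k, 2 ≤ k → ∀ {m : ℕ} {M : Matrix (Fin m) (Fin m) ℤ},
    IsNType k M → ¬IsFinType M ∧ ¬IsAffType M := by
  intro k
  induction k using Nat.strong_induction_on with
  | _ k ih =>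
    intro hk m M h
    rcases k with _|_|_|k
    · omega
    · omega
    · rw [IsNType] at h; exact ⟨h.2.2.1, h.2.2.2.1⟩
    · rw [IsNType] at h
      obtain ⟨hgcm, hconn, ⟨m', B, hsub, hB⟩, hall⟩ := h
      have hBconn := (ntype_gcm_indec hB).2
      have hnB := ih (k+2) (by omega) (by omega) hB
      obtain ⟨f, hfmono, hBeq⟩ := hsub.1
      constructor
      · intro hfin
        subst hBeq
        exact hnB.1 (fin_sub hfin hfmono.injective hBconn)
      · intro haff
        subst hBeq
        exact hnB.1 (aff_sub_fin haff hfmono.injective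
          (not_surj_of_lt hsub.2.2 f) hBconn)

lemma ntype_le_dim : ∀ (k : ℕ) {m : ℕ} (M : Matrix (Fin m) (Fin m) ℤ), IsNType k M → k ≤ m := by
  intro k
  induction k using Nat.strong_induction_on with
  | _ k ih =>
    intro m M h
    rcases k with _|_|_|k
    · omega
    · rw [IsNType] at h
      have := Fin.pos_iff_nonempty.mpr h.2.1.nonempty
      omega
    · rw [IsNType] at h
      have h1 : 0 < m := Fin.pos_iff_nonempty.mpr h.2.1.nonempty
      rcases Nat.lt_or_ge m 2 with hm | hm
      · have hm1 : m = 1 := by omega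
        subst hm1
        exact absurd (one_dim_fin (h.1.1 0)) h.2.2.1
      · omega
    · rw [IsNType] at h
      obtain ⟨_, _, ⟨m', B, hsub, hB⟩, _⟩ := h
      have h1 := ih (k+2) (by omega) B hB
      have h2 := hsub.2.2
      omega

lemma ntype_unique : ∀ (m : ℕ) (M : Matrix (Fin m) (Fin m) ℤ) (k l : ℕ),
    IsNType k M → IsNType l M → k = l := by
  intro m
  induction m using Nat.strong_induction_on with
  | _ m ih =>
    intro M k l hk hl
    suffices haux : ∀ k l, k < l → IsNType k M → IsNType l M → False by
      rcases lt_trichotomy k l with h | h | h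
      · exact absurd (haux k l h hk hl) (by simp)
      · exact h
      · exact absurd (haux l k h hl hk) (by simp)
    clear hk hl k l
    intro k l hkl hk hl
    rcases Nat.lt_or_ge k 2 with hk2 | hk2
    · rcases Nat.lt_or_ge l 2 with hl2 | hl2
      · -- k = 0, l = 1
        have hk0 : k = 0 := by omega
        have hl1 : l = 1 := by omega
        subst hk0; subst hl1
        rw [IsNType] at hk
        rw [IsNType] at hl
        exact not_fin_and_aff hk hl
      · have := ntype_not_fin_aff l hl2 hl
        rcases Nat.lt_or_ge k 1 with hk1 | hk1
        · have hk0 : k = 0 := by omega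
          subst hk0; rw [IsNType] at hk
          exact this.1 hk
        · have hk1' : k = 1 := by omega
          subst hk1'; rw [IsNType] at hk
          exact this.2 hk
    · -- 2 ≤ k < l, so l ≥ 3
      obtain ⟨l', rfl⟩ : ∃ l', l = l' + 3 := ⟨l - 3, by omega⟩
      rw [IsNType] at hl
      obtain ⟨_, _, ⟨m', B, hsub, hB⟩, _⟩ := hl
      have hBconn := (ntype_gcm_indec hB).2
      obtain ⟨t, ht, hBt⟩ := ntype_sub_lt hk2 hk hsub hBconn
      have := ih m' hsub.2.2 B t (l' + 2) hBt hB
      omega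

lemma ntype_exists : ∀ (m : ℕ) (M : Matrix (Fin m) (Fin m) ℤ), IsGCM M → IsIndecomposable M →
    ∃ k, IsNType k M := by
  intro m
  induction m using Nat.strong_induction_on with
  | _ m ih =>
    intro M hgcm hconn
    by_cases hfin : IsFinType M
    · exact ⟨0, by rw [IsNType]; exact hfin⟩
    by_cases haff : IsAffType M
    · exact ⟨1, by rw [IsNType]; exact haff⟩
    by_cases hall : ∀ (m' : ℕ) (B : Matrix (Fin m') (Fin m') ℤ),
        IsProperPrincipalSubmatrix B M → IsIndecomposable B → IsFinType B ∨ IsAffType B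
    · exact ⟨2, by rw [IsNType]; exact ⟨hgcm, hconn, hfin, haff, hall⟩⟩
    · push_neg at hall
      obtain ⟨m0, B0, hsub0, hB0conn, hB0not⟩ := hall
      have hB0gcm : IsGCM B0 := by
        obtain ⟨f, hf, rfl⟩ := hsub0.1; exact gcm_submatrix hgcm hf.injective
      obtain ⟨t0, ht0⟩ := ih m0 hsub0.2.2 B0 hB0gcm hB0conn
      have ht02 : 2 ≤ t0 := by
        rcases t0 with _|_|t0
        · rw [IsNType] at ht0; exact absurd ht0 hB0not.1
        · rw [IsNType] at ht0; exact absurd ht0 hB0not.2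
        · omega
      set T : Set ℕ := {t | ∃ (m' : ℕ) (B : Matrix (Fin m') (Fin m') ℤ),
        IsProperPrincipalSubmatrix B M ∧ IsIndecomposable B ∧ IsNType t B} with hT
      have hbdd : ∀ t ∈ T, t ≤ m := by
        rintro t ⟨m', B, hsub, _, hB⟩
        have := ntype_le_dim t B hB
        have := hsub.2.2
        omega
      have ht0T : t0 ∈ T := ⟨m0, B0, hsub0, hB0conn, ht0⟩
      have hne : T.Nonempty := ⟨t0, ht0T⟩
      have hKmem : sSup T ∈ T := Nat.sSup_mem hne ⟨m, fun t ht => hbdd t ht⟩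
      have hK2 : 2 ≤ sSup T := le_trans ht02 (le_csSup ⟨m, fun t ht => hbdd t ht⟩ ht0T)
      obtain ⟨mK, BK, hsubK, hBKconn, hBK⟩ := hKmem
      refine ⟨sSup T + 1, ?_⟩
      obtain ⟨K', hK'⟩ : ∃ K', sSup T = K' + 2 := ⟨sSup T - 2, by omega⟩
      rw [hK'] at hBK ⊢
      have : K' + 2 + 1 = K' + 3 := by omega
      rw [this, IsNType]
      refine ⟨hgcm, hconn, ⟨mK, BK, hsubK, hBK⟩, ?_⟩
      intro m' B hsub hBconn'
      have hBgcm : IsGCM B := by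
        obtain ⟨f, hf, rfl⟩ := hsub.1; exact gcm_submatrix hgcm hf.injective
      obtain ⟨t, ht⟩ := ih m' hsub.2.2 B hBgcm hBconn'
      have htK : t ≤ sSup T := le_csSup ⟨m, fun t ht => hbdd t ht⟩ ⟨m', B, hsub, hBconn', ht⟩
      exact ⟨t, by omega, ht⟩

lemma ntype_step {p m' : ℕ} {M : Matrix (Fin p) (Fin p) ℤ} {B : Matrix (Fin m') (Fin m') ℤ}
    (hsub : IsProperPrincipalSubmatrix B M) (hBconn : IsIndecomposable B)
    {t s : ℕ} (ht2 : 2 ≤ t) (hB : IsNType t B) (hM : IsNType s M) : t < s := by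
  have hnB := ntype_not_fin_aff t ht2 hB
  rcases s with _|_|_|s
  · rw [IsNType] at hM
    obtain ⟨f, hf, rfl⟩ := hsub.1
    exact absurd (fin_sub hM hf.injective hBconn) hnB.1
  · rw [IsNType] at hM
    obtain ⟨f, hf, rfl⟩ := hsub.1
    exact absurd (aff_sub_fin hM hf.injective (not_surj_of_lt hsub.2.2 f) hBconn) hnB.1
  · rw [IsNType] at hM
    rcases hM.2.2.2.2 _ _ hsub hBconn with hf | ha
    · exact absurd hf hnB.1
    · exact absurd ha hnB.2
  · obtain ⟨t', ht', hBt'⟩ := ntype_sub_lt (by omega) hM hsub hBconn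
    have := ntype_unique m' B t t' hB hBt'
    omega

lemma hyp_pair_of_max : ∀ (m : ℕ), 2 ≤ m → ∀ (M : Matrix (Fin m) (Fin m) ℤ), IsNType m M →
    ∃ p q : Fin m, p ≠ q ∧ 4 < M p q * M q p := by
  intro m
  induction m using Nat.strong_induction_on with
  | _ m ih =>
    intro hm M h
    rcases Nat.lt_or_ge m 3 with hm3 | hm3
    · have hm2 : m = 2 := by omega
      subst hm2
      rw [IsNType] at h
      exact ⟨0, 1, by decide, pair_hyp_prod h⟩
    · obtain ⟨k, rfl⟩ : ∃ k, m = k + 3 := ⟨m - 3, by omega⟩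
      rw [IsNType] at h
      obtain ⟨_, _, ⟨m', B, hsub, hB⟩, _⟩ := h
      have hdim := ntype_le_dim (k+2) B hB
      have hlt := hsub.2.2
      obtain rfl : m' = k + 2 := by omega
      obtain ⟨p, q, hpq, hprod⟩ := ih (k+2) (by omega) (by omega) B hB
      obtain ⟨f, hf, rfl⟩ := hsub.1
      exact ⟨f p, f q, fun h => hpq (hf.injective h), by simpa using hprod⟩

end NTypeStruct
section Chain

open Finset

lemma strictMono_factor {N a b : ℕ} {f : Fin a → Fin N} {f' : Fin b → Fin N}
    (hf : StrictMono f) (hf' : StrictMono f') (h : Set.range f ⊆ Set.range f') :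
    ∃ g : Fin a → Fin b, StrictMono g ∧ ∀ i, f' (g i) = f i := by
  choose g hg using fun i => h (Set.mem_range_self i)
  refine ⟨g, fun i j hij => hf'.lt_iff_lt.mp (by rw [hg i, hg j]; exact hf hij), hg⟩

lemma pair_hyp_of_prod {B : Matrix (Fin 2) (Fin 2) ℤ} (hB : IsGCM B)
    (h4 : 4 < B 0 1 * B 1 0) : IsHypType B := by
  have hx : B 0 1 ≠ 0 := by intro h; rw [h] at h4; simp at h4
  refine ⟨hB, pair_conn (Or.inl hx), ?_, ?_, ?_⟩
  · intro hf; linarith [pair_prod_le_four hB (Or.inl hf)]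
  · intro ha; linarith [pair_prod_le_four hB (Or.inr ha)]
  · intro m B' hsub hconn'
    obtain ⟨f, hf, rfl⟩ := hsub.1
    have hm : m = 1 := by have := hsub.2; omega
    subst hm
    exact Or.inl (one_dim_fin (hB.1 (f 0)))

lemma exists_attach {N a : ℕ} {A : Matrix (Fin N) (Fin N) ℤ} (hconn : IsIndecomposable A)
    {f : Fin a → Fin N} (ha : 0 < a) (hns : ¬ Function.Surjective f) :
    ∃ v s, s ∈ Set.range f ∧ v ∉ Set.range f ∧ (gcmGraph A).Adj v s := by
  unfold Function.Surjective at hns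
  push_neg at hns
  obtain ⟨b, hb⟩ := hns
  obtain ⟨w⟩ := hconn.preconnected (f ⟨0, ha⟩) b
  obtain ⟨x, y, hx, hy, hxy⟩ := exists_adj_cut (Set.range f) w ⟨_, rfl⟩
    (fun ⟨i, hi⟩ => hb i hi)
  exact ⟨y, x, hx, hy, hxy.symm⟩

lemma conn_insert {N a : ℕ} {A : Matrix (Fin N) (Fin N) ℤ}
    {f : Fin a → Fin N} {f' : Fin (a+1) → Fin N}
    (hf : StrictMono f) (hf' : StrictMono f')
    (hc : IsIndecomposable (A.submatrix f f))
    {v s : Fin N} (hs : s ∈ Set.range f) (hv : v ∉ Set.range f)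
    (hadj : (gcmGraph A).Adj v s)
    (hrange : Set.range f' = Set.range f ∪ {v}) :
    IsIndecomposable (A.submatrix f' f') := by
  obtain ⟨g, hg, hfg⟩ := strictMono_factor hf hf'
    (by rw [hrange]; exact Set.subset_union_left)
  let hom : gcmGraph (A.submatrix f f) →g gcmGraph (A.submatrix f' f') :=
    ⟨g, fun {i j} h => ⟨fun he => h.1 (hg.injective he), by
        simpa [Matrix.submatrix_apply, hfg] using h.2⟩⟩
  obtain ⟨wv, hwv⟩ : v ∈ Set.range f' := by
    rw [hrange]; exact Set.mem_union_right _ rfl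
  obtain ⟨is, his⟩ := hs
  have haux : ∀ w : Fin (a+1), (∃ i, w = g i) ∨ w = wv := by
    intro w
    have hw : f' w ∈ Set.range f ∪ {v} := by
      rw [← hrange]; exact Set.mem_range_self w
    rcases hw with ⟨i, hi⟩ | h
    · exact Or.inl ⟨i, hf'.injective (by rw [hfg, hi])⟩
    · exact Or.inr (hf'.injective (by rw [hwv]; exact h))
  have hadj' : (gcmGraph (A.submatrix f' f')).Adj wv (g is) := by
    refine ⟨?_, ?_⟩
    · intro he
      apply hv
      refine ⟨is, ?_⟩
      rw [← hfg, ← he, hwv]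
    · have h2 := hadj.2
      simp only [Matrix.submatrix_apply, hfg, his, hwv]
      tauto
  have hreach : ∀ w, (gcmGraph (A.submatrix f' f')).Reachable w (g is) := by
    intro w
    rcases haux w with ⟨i, rfl⟩ | rfl
    · exact (hc.preconnected i is).map hom
    · exact hadj'.reachable
  exact SimpleGraph.Connected.mk (fun x y => (hreach x).trans (hreach y).symm)

lemma pair_emb_strictMono {N : ℕ} {p q : Fin N} (h : p < q) :
    StrictMono (fun i : Fin 2 => if i = 0 then p else q) := by
  intro a b hab
  fin_cases a <;> fin_cases b <;> simp_all

lemma ntype_eq_dim_of_hyp_pair {N : ℕ} (hN : 3 ≤ N) {A : Matrix (Fin N) (Fin N) ℤ}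
    (hA : IsGCM A) (hconn : IsIndecomposable A) {p q : Fin N} (hpq : p ≠ q)
    (hprod : 4 < A p q * A q p) {k : ℕ} (hk : IsNType k A) : k = N := by
  -- WLOG p < q
  wlog hlt : p < q with H
  · exact H hN hA hconn hpq.symm (by linarith [mul_comm (A p q) (A q p)]) hk
      (lt_of_le_of_ne (not_lt.mp hlt) hpq.symm)
  have main : ∀ j, 2 ≤ j → j ≤ N - 1 → ∃ (f : Fin j → Fin N), StrictMono f ∧
      IsIndecomposable (A.submatrix f f) ∧ ∃ t, j ≤ t ∧ IsNType t (A.submatrix f f) := by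
    intro j
    induction j with
    | zero => omega
    | succ j ihj =>
      intro h2 hle
      rcases Nat.lt_or_ge j 2 with hj2 | hj2
      · -- base: j + 1 = 2
        have hj1 : j = 1 := by omega
        subst hj1
        set f : Fin 2 → Fin N := fun i => if i = 0 then p else q with hf_def
        have hfmono : StrictMono f := pair_emb_strictMono hlt
        have hent : (A.submatrix f f) 0 1 * (A.submatrix f f) 1 0 = A p q * A q p := by
          simp [hf_def, Matrix.submatrix_apply]
        have hhyp : IsHypType (A.submatrix f f) :=
          pair_hyp_of_prod (gcm_submatrix hA hfmono.injective) (by rw [hent]; exact hprod)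
        exact ⟨f, hfmono, hhyp.2.1, 2, le_rfl, by rw [IsNType]; exact hhyp⟩
      · obtain ⟨f, hf, hcsub, t, ht, htype⟩ := ihj hj2 (by omega)
        obtain ⟨v, s, hs, hv, hadj⟩ := exists_attach hconn (by omega)
          (not_surj_of_lt (by omega) f)
        set S' : Finset (Fin N) := insert v (univ.image f) with hS'_def
        have hcard : S'.card = j + 1 := by
          rw [hS'_def, card_insert_of_notMem (by
            rw [mem_image]; push_neg; intro i _; exact fun h => hv ⟨i, h⟩),
            card_image_of_injective _ hf.injective, card_univ, Fintype.card_fin]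
        set f' : Fin (j+1) → Fin N := ⇑(S'.orderEmbOfFin hcard) with hf'_def
        have hf'mono : StrictMono f' := (S'.orderEmbOfFin hcard).strictMono
        have hrange : Set.range f' = Set.range f ∪ {v} := by
          rw [hf'_def, Finset.range_orderEmbOfFin, hS'_def]
          rw [coe_insert, coe_image, coe_univ, Set.image_univ]
          rw [Set.insert_eq, Set.union_comm]
        have hcsub' : IsIndecomposable (A.submatrix f' f') :=
          conn_insert hf hf'mono hcsub hs hv hadj hrange
        obtain ⟨g, hg, hfg⟩ := strictMono_factor hf hf'mono
          (by rw [hrange]; exact Set.subset_union_left)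
        have hBeq : A.submatrix f f = (A.submatrix f' f').submatrix g g := by
          funext i j'
          simp [Matrix.submatrix_apply, hfg]
        have hproper : IsProperPrincipalSubmatrix (A.submatrix f f) (A.submatrix f' f') :=
          ⟨⟨g, hg, hBeq⟩, by omega, by omega⟩
        obtain ⟨t', ht'⟩ := ntype_exists (j+1) (A.submatrix f' f')
          (gcm_submatrix hA hf'mono.injective) hcsub'
        have := ntype_step hproper hcsub (by omega) htype ht'
        exact ⟨f', hf'mono, hcsub', t', by omega, ht'⟩
  obtain ⟨f, hf, hcsub, t, ht, htype⟩ := main (N-1) (by omega) le_rfl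
  have hproper : IsProperPrincipalSubmatrix (A.submatrix f f) A :=
    ⟨⟨f, hf, rfl⟩, by omega, by omega⟩
  have hstep := ntype_step hproper hcsub (by omega) htype hk
  have := ntype_le_dim k A hk
  omega

lemma exists_neighbor {V : Type*} {G : SimpleGraph V} (h : G.Connected) {a b : V}
    (hab : a ≠ b) : ∃ c, G.Adj a c := by
  obtain ⟨w⟩ := h.preconnected a b
  cases w with
  | nil => exact absurd rfl hab
  | cons hadj p => exact ⟨_, hadj⟩

end Chain
/-- Theorem 3.2 of the paper: let `n ≥ 2` and let `A` be an
`(n+1) × (n+1)` GCM whose principal submatrix on the first `n` indices is of type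
`N_{n-1,n}`. Then `A` is of type `N_{n,n+1}` if and only if the added entries are
not all zero and, for each `j`, the pair `(A (last) j, A j (last))` is one of
`(0,0)`, `(-1,-1)`, `(-1, -2)`, `(-1, -3)`, `(-1, -4)` (in either order), or `(-2,-2)`. -/
theorem isNType_succ_iff_added_entries {n : ℕ} (hn : 2 ≤ n)
    {A : Matrix (Fin (n + 1)) (Fin (n + 1)) ℤ} (hA : IsGCM A)
    (hsub : IsNType (n - 1) (A.submatrix Fin.castSucc Fin.castSucc)) :
    IsNType n A ↔
      ((¬ ∀ j : Fin n, A (Fin.last n) j.castSucc = 0 ∧ A j.castSucc (Fin.last n) = 0) ∧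
        ∀ j : Fin n,
          (A (Fin.last n) j.castSucc = 0 ∧ A j.castSucc (Fin.last n) = 0) ∨
          (A (Fin.last n) j.castSucc = -1 ∧ A j.castSucc (Fin.last n) = -1) ∨
          (A (Fin.last n) j.castSucc = -1 ∧
            (A j.castSucc (Fin.last n) = -2 ∨ A j.castSucc (Fin.last n) = -3 ∨
              A j.castSucc (Fin.last n) = -4)) ∨
          (A j.castSucc (Fin.last n) = -1 ∧
            (A (Fin.last n) j.castSucc = -2 ∨ A (Fin.last n) j.castSucc = -3 ∨
              A (Fin.last n) j.castSucc = -4)) ∨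
          (A (Fin.last n) j.castSucc = -2 ∧ A j.castSucc (Fin.last n) = -2)) := by
  set C : Matrix (Fin n) (Fin n) ℤ := A.submatrix Fin.castSucc Fin.castSucc with hC_def
  obtain ⟨hCgcm, hCconn⟩ := ntype_gcm_indec hsub
  have hcs_ne : ∀ j : Fin n, j.castSucc ≠ Fin.last n := fun j => (Fin.castSucc_lt_last j).ne
  constructor
  · -- forward direction
    intro hNA
    have hAconn : IsIndecomposable A := (ntype_gcm_indec hNA).2
    constructor
    · -- not all zero
      intro hz
      have hne : Fin.last n ≠ (⟨0, by omega⟩ : Fin n).castSucc := (hcs_ne _).symm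
      obtain ⟨c, hadj⟩ := exists_neighbor hAconn hne
      obtain ⟨hbne, hor⟩ := hadj
      rcases Fin.eq_castSucc_or_eq_last c with ⟨j, rfl⟩ | rfl
      · rcases hor with h | h
        · exact h (hz j).1
        · exact h (hz j).2
      · exact hbne rfl
    · -- pair conditions
      intro j
      by_cases hx0 : A (Fin.last n) j.castSucc = 0
      · exact Or.inl ⟨hx0, hA.2.2 _ _ hx0⟩
      · have hy0 : A j.castSucc (Fin.last n) ≠ 0 := fun h => hx0 (hA.2.2 _ _ h)
        have hxle : A (Fin.last n) j.castSucc ≤ 0 := hA.2.1 _ _ (hcs_ne j).symm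
        have hyle : A j.castSucc (Fin.last n) ≤ 0 := hA.2.1 _ _ (hcs_ne j)
        have hprod : A (Fin.last n) j.castSucc * A j.castSucc (Fin.last n) ≤ 4 := by
          by_contra hgt
          push_neg at hgt
          have := ntype_eq_dim_of_hyp_pair (by omega) hA hAconn (hcs_ne j).symm hgt hNA
          omega
        have hx1 : A (Fin.last n) j.castSucc ≤ -1 := by omega
        have hy1 : A j.castSucc (Fin.last n) ≤ -1 := by omega
        have hx4 : -4 ≤ A (Fin.last n) j.castSucc := by nlinarith
        have hy4 : -4 ≤ A j.castSucc (Fin.last n) := by nlinarith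
        have hx' : A (Fin.last n) j.castSucc = -1 ∨ A (Fin.last n) j.castSucc = -2 ∨
            A (Fin.last n) j.castSucc = -3 ∨ A (Fin.last n) j.castSucc = -4 := by omega
        have hy' : A j.castSucc (Fin.last n) = -1 ∨ A j.castSucc (Fin.last n) = -2 ∨
            A j.castSucc (Fin.last n) = -3 ∨ A j.castSucc (Fin.last n) = -4 := by omega
        rcases hx' with h1 | h1 | h1 | h1 <;> rcases hy' with h2 | h2 | h2 | h2 <;>
          rw [h1, h2] at hprod <;> simp [h1, h2] at hprod ⊢
  · -- reverse direction
    rintro ⟨hnz, hcases⟩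
    have hprod : ∀ j : Fin n, A (Fin.last n) j.castSucc * A j.castSucc (Fin.last n) ≤ 4 := by
      intro j
      rcases hcases j with ⟨h1, h2⟩ | ⟨h1, h2⟩ | ⟨h1, h2 | h2 | h2⟩ | ⟨h1, h2 | h2 | h2⟩ |
        ⟨h1, h2⟩ <;> rw [h1, h2] <;> norm_num
    -- A is connected
    push_neg at hnz
    obtain ⟨j0, hj0⟩ := hnz
    have hj0' : A (Fin.last n) j0.castSucc ≠ 0 ∨ A j0.castSucc (Fin.last n) ≠ 0 := by
      by_contra h
      push_neg at h
      exact absurd h.2 (hj0 h.1)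
    have hAconn : IsIndecomposable A := by
      let hom : gcmGraph C →g gcmGraph A :=
        ⟨Fin.castSucc, fun {i j} h =>
          ⟨fun he => h.1 (Fin.strictMono_castSucc.injective he), h.2⟩⟩
      have hreach : ∀ w : Fin (n+1), (gcmGraph A).Reachable w j0.castSucc := by
        intro w
        rcases Fin.eq_castSucc_or_eq_last w with ⟨i, rfl⟩ | rfl
        · exact (hCconn.preconnected i j0).map hom
        · exact (SimpleGraph.Adj.reachable ⟨(hcs_ne j0).symm, hj0'⟩)
      exact SimpleGraph.Connected.mk (fun x y => (hreach x).trans (hreach y).symm)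
    -- classification of proper connected principal submatrices
    have hclass : ∀ (m : ℕ) (B : Matrix (Fin m) (Fin m) ℤ),
        IsProperPrincipalSubmatrix B A → IsIndecomposable B →
        ∃ t, t ≤ n - 1 ∧ IsNType t B := by
      intro m B hp hc
      obtain ⟨⟨f, hf, rfl⟩, hm0, hmlt⟩ := hp
      have hBgcm := gcm_submatrix hA hf.injective
      obtain ⟨t, htype⟩ := ntype_exists m _ hBgcm hc
      have htle : t ≤ m := ntype_le_dim t _ htype
      rcases Nat.lt_or_ge t n with htn | htn
      · exact ⟨t, by omega, htype⟩
      · exfalso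
        obtain rfl : t = m := by omega
        obtain ⟨p, q, hpq, hBprod⟩ := hyp_pair_of_max _ (by omega) _ htype
        simp only [Matrix.submatrix_apply] at hBprod
        rcases Fin.eq_castSucc_or_eq_last (f p) with ⟨j1, hj1⟩ | hj1
        · rcases Fin.eq_castSucc_or_eq_last (f q) with ⟨j2, hj2⟩ | hj2
          · -- both inside C : hyperbolic pair in C
            rw [hj1, hj2] at hBprod
            have hj12 : j1 ≠ j2 := by
              intro h
              apply hpq
              apply hf.injective
              rw [hj1, hj2, h]
            have hCprod : 4 < C j1 j2 * C j2 j1 := by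
              simpa [hC_def, Matrix.submatrix_apply] using hBprod
            rcases Nat.lt_or_ge n 3 with hn3 | hn3
            · -- n = 2 : C is affine, contradiction with product > 4
              obtain rfl : n = 2 := by omega
              have hCaff : IsAffType C := by
                rw [show (2:ℕ) - 1 = 1 by norm_num] at hsub
                rw [IsNType] at hsub
                exact hsub
              have hle := pair_prod_le_four hCgcm (Or.inr hCaff)
              have horder : C j1 j2 * C j2 j1 = C 0 1 * C 1 0 ∨
                  C j1 j2 * C j2 j1 = C 1 0 * C 0 1 := by
                fin_cases j1 <;> fin_cases j2
                · exact absurd rfl hj12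
                · exact Or.inl rfl
                · exact Or.inr rfl
                · exact absurd rfl hj12
              rcases horder with h | h <;> rw [h] at hCprod
              · omega
              · rw [mul_comm] at hCprod; omega
            · have := ntype_eq_dim_of_hyp_pair hn3 hCgcm hCconn hj12 hCprod hsub
              omega
          · -- f q = last
            rcases Fin.eq_castSucc_or_eq_last (f p) with ⟨j1', hj1'⟩ | hj1'
            · rw [hj1', hj2] at hBprod
              have := hprod j1'
              nlinarith [hBprod, this]
            · rw [hj1'] at hj1
              exact absurd hj1 (hcs_ne j1).symm
        · -- f p = last
          have hfq : f q ≠ Fin.last n := by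
            rw [← hj1]; exact fun h => hpq (hf.injective h.symm)
          rcases Fin.eq_castSucc_or_eq_last (f q) with ⟨j2, hj2⟩ | hj2
          · rw [hj1, hj2] at hBprod
            have := hprod j2
            nlinarith [hBprod, this]
          · exact hfq hj2
    rcases Nat.lt_or_ge n 3 with hn3 | hn3
    · -- n = 2 : hyperbolic
      obtain rfl : n = 2 := by omega
      have hCaff : IsAffType C := by
        rw [show (2:ℕ) - 1 = 1 by norm_num] at hsub
        rw [IsNType] at hsub
        exact hsub
      rw [IsNType]
      refine ⟨hA, hAconn, ?_, ?_, ?_⟩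
      · intro hfin
        exact not_fin_and_aff (fin_sub hfin Fin.strictMono_castSucc.injective hCconn) hCaff
      · intro haff
        exact not_fin_and_aff
          (aff_sub_fin haff Fin.strictMono_castSucc.injective
            (not_surj_of_lt (by omega) _) hCconn) hCaff
      · intro m B hp hc
        obtain ⟨t, ht, htype⟩ := hclass m B hp hc
        rcases t with _|_|t
        · rw [IsNType] at htype; exact Or.inl htype
        · rw [IsNType] at htype; exact Or.inr htype
        · omega
    · -- n ≥ 3
      obtain ⟨k, rfl⟩ : ∃ k, n = k + 3 := ⟨n - 3, by omega⟩
      have hsub' : IsNType (k + 2) C := by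
        rw [show k + 3 - 1 = k + 2 by omega] at hsub
        exact hsub
      rw [IsNType]
      refine ⟨hA, hAconn, ⟨k + 3, C, ⟨⟨Fin.castSucc, Fin.strictMono_castSucc, rfl⟩,
        by omega, by omega⟩, hsub'⟩, ?_⟩
      intro m B hp hc
      obtain ⟨t, ht, htype⟩ := hclass m B hp hc
      exact ⟨t, by omega, htype⟩
end

section
/- Let k ≥ 2 and a ≥ 1 be integers, and let A be a generalized Cartan matrix of type N_{k,k+a}. Then every principal submatrix of A of dimension smaller than a+1 is of finite type, and every principal submatrix of A of hyperbolic (N_2) type has dimension at least a+2. -/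
section Aux

open Finset

lemma IsGCM.submatrix' {m n : ℕ} {A : Matrix (Fin n) (Fin n) ℤ} (hA : IsGCM A)
    {f : Fin m → Fin n} (hf : Function.Injective f) : IsGCM (A.submatrix f f) :=
  ⟨fun i => hA.1 _, fun i j hij => hA.2.1 _ _ fun h => hij (hf h),
   fun i j h => hA.2.2 _ _ h⟩

lemma restrict_sum_eq {m n : ℕ} (A : Matrix (Fin n) (Fin n) ℤ)
    {f : Fin m → Fin n} (hf : Function.Injective f) (u : Fin n → ℚ) (i : Fin n) :
    ∑ j, (A i (f j) : ℚ) * u (f j)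
      = (∑ j' : Fin n, (A i j' : ℚ) * u j')
        - ∑ j' ∈ Finset.univ \ Finset.univ.image f, (A i j' : ℚ) * u j' := by
  have h1 : ∑ j' ∈ Finset.univ.image f, (A i j' : ℚ) * u j'
      = ∑ j, (A i (f j) : ℚ) * u (f j) :=
    Finset.sum_image (fun x _ y _ h => hf h)
  have h2 := Finset.sum_sdiff (f := fun j' => (A i j' : ℚ) * u j')
      (Finset.subset_univ (Finset.univ.image f))
  linarith

lemma compl_sum_nonpos {m n : ℕ} {A : Matrix (Fin n) (Fin n) ℤ} (hA : IsGCM A)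
    {f : Fin m → Fin n} {u : Fin n → ℚ} (hu : ∀ j, 0 < u j) (i : Fin m) :
    ∑ j' ∈ Finset.univ \ Finset.univ.image f, (A (f i) j' : ℚ) * u j' ≤ 0 := by
  apply Finset.sum_nonpos
  intro j' hj'
  have hne : f i ≠ j' := by
    rintro rfl
    simp only [Finset.mem_sdiff, Finset.mem_image] at hj'
    exact hj'.2 ⟨i, Finset.mem_univ i, rfl⟩
  have h1 : (A (f i) j' : ℚ) ≤ 0 := by exact_mod_cast hA.2.1 _ _ hne
  exact mul_nonpos_of_nonpos_of_nonneg h1 (hu j').le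

/-- Perron-type lemma: an indecomposable GCM `D` with a positive vector `v`
with `D v ≥ 0` and `D v ≠ 0` is of finite type. -/
lemma pf_lemma {m : ℕ} {D : Matrix (Fin m) (Fin m) ℤ} (hD : IsGCM D)
    (hconn : IsIndecomposable D) {v : Fin m → ℚ} (hv : ∀ i, 0 < v i)
    (h0 : ∀ i, 0 ≤ ∑ j, (D i j : ℚ) * v j) (hpos : ∃ i, 0 < ∑ j, (D i j : ℚ) * v j) :
    IsFinType D := by
  suffices H : ∀ N : ℕ, ∀ v : Fin m → ℚ, (∀ i, 0 < v i) →
      (∀ i, 0 ≤ ∑ j, (D i j : ℚ) * v j) → (∃ i, 0 < ∑ j, (D i j : ℚ) * v j) →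
      (Finset.univ.filter (fun i => ∑ j, (D i j : ℚ) * v j = 0)).card ≤ N →
      ∃ u : Fin m → ℚ, (∀ i, 0 < u i) ∧ (∀ i, 0 < ∑ j, (D i j : ℚ) * u j) by
    exact ⟨hD, hconn, H _ v hv h0 hpos le_rfl⟩
  intro N
  induction N with
  | zero =>
    intro v hv h0 _ hcard
    refine ⟨v, hv, fun i => ?_⟩
    rcases lt_or_eq_of_le (h0 i) with h | h
    · exact h
    · exfalso
      have : i ∈ Finset.univ.filter (fun i => ∑ j, (D i j : ℚ) * v j = 0) := by
        simp [← h]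
      rw [Nat.le_zero, Finset.card_eq_zero] at hcard
      simp [hcard] at this
  | succ N ih =>
    intro v hv h0 hpos hcard
    by_cases hz : ∀ i, 0 < ∑ j, (D i j : ℚ) * v j
    · exact ⟨v, hv, hz⟩
    push_neg at hz
    obtain ⟨z, hzle⟩ := hz
    have hz0 : ∑ j, (D z j : ℚ) * v j = 0 := le_antisymm hzle (h0 z)
    obtain ⟨p0, hp0⟩ := hpos
    obtain ⟨w⟩ := hconn.preconnected z p0
    obtain ⟨d, _, hdS, hdS'⟩ := w.exists_boundary_dart
      {i | ∑ j, (D i j : ℚ) * v j = 0} hz0 (by simp only [Set.mem_setOf_eq]; exact ne_of_gt hp0)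
    set x := d.fst with hxdef
    set y := d.snd with hydef
    have hadj : (gcmGraph D).Adj x y := d.adj
    have hxy : x ≠ y := hadj.1
    have hDxy : D x y ≠ 0 := by
      rcases hadj.2 with h | h
      · exact h
      · intro h'; exact h (hD.2.2 _ _ h')
    have hDxyneg : (D x y : ℚ) < 0 := by
      have := hD.2.1 x y hxy
      exact_mod_cast lt_of_le_of_ne this hDxy
    have hx0 : ∑ j, (D x j : ℚ) * v j = 0 := hdS
    have hy0 : 0 < ∑ j, (D y j : ℚ) * v j := lt_of_le_of_ne (h0 y) (Ne.symm hdS')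
    set sy := ∑ j, (D y j : ℚ) * v j with hsydef
    set ε := min (v y / 2) (sy / 4) with hεdef
    have hε : 0 < ε := lt_min (by linarith [hv y]) (by linarith)
    have hε1 : ε ≤ v y / 2 := min_le_left _ _
    have hε2 : ε ≤ sy / 4 := min_le_right _ _
    set v' := Function.update v y (v y - ε) with hv'def
    have key : ∀ i, ∑ j, (D i j : ℚ) * v' j = (∑ j, (D i j : ℚ) * v j) - (D i y : ℚ) * ε := by
      intro i
      have hterm : ∀ j, (D i j : ℚ) * v' j
          = (D i j : ℚ) * v j - (if j = y then (D i j : ℚ) * ε else 0) := by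
        intro j
        by_cases h : j = y
        · subst h; simp [hv'def, Function.update_apply]; ring
        · simp [hv'def, Function.update_apply, h]
      rw [Finset.sum_congr rfl (fun j _ => hterm j), Finset.sum_sub_distrib,
        Finset.sum_ite_eq' Finset.univ y (fun j => (D i j : ℚ) * ε)]
      simp
    have hv' : ∀ i, 0 < v' i := by
      intro i
      by_cases h : i = y
      · subst h; simp only [hv'def, Function.update_self]; linarith [hv y]
      · simp only [hv'def, Function.update_apply, h, if_false]; exact hv i
    have h0' : ∀ i, 0 ≤ ∑ j, (D i j : ℚ) * v' j := by
      intro i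
      rw [key i]
      by_cases h : i = y
      · subst h
        have : (D y y : ℚ) = 2 := by exact_mod_cast hD.1 y
        rw [this]; linarith
      · have hDiy : (D i y : ℚ) ≤ 0 := by exact_mod_cast hD.2.1 i y h
        nlinarith [h0 i, hε]
    have hposy : 0 < ∑ j, (D y j : ℚ) * v' j := by
      rw [key y]
      have : (D y y : ℚ) = 2 := by exact_mod_cast hD.1 y
      rw [this]; linarith
    have hsubset : Finset.univ.filter (fun i => ∑ j, (D i j : ℚ) * v' j = 0)
        ⊆ (Finset.univ.filter (fun i => ∑ j, (D i j : ℚ) * v j = 0)).erase x := by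
      intro i hi
      simp only [Finset.mem_filter, Finset.mem_univ, true_and] at hi
      have hiy : i ≠ y := by rintro rfl; exact absurd hi (ne_of_gt hposy)
      have hDiy : (D i y : ℚ) ≤ 0 := by exact_mod_cast hD.2.1 i y hiy
      have h1 : ∑ j, (D i j : ℚ) * v j = 0 := by
        have := key i
        nlinarith [h0 i, hε]
      have hxpos : 0 < ∑ j, (D x j : ℚ) * v' j := by
        rw [key x, hx0]; nlinarith [hε, hDxyneg]
      have hix : i ≠ x := by rintro rfl; exact absurd hi (ne_of_gt hxpos)
      exact Finset.mem_erase.mpr ⟨hix, by simp [h1]⟩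
    have hxmem : x ∈ Finset.univ.filter (fun i => ∑ j, (D i j : ℚ) * v j = 0) := by
      simp [hx0]
    have hcard' : (Finset.univ.filter (fun i => ∑ j, (D i j : ℚ) * v' j = 0)).card ≤ N := by
      have h1 := Finset.card_le_card hsubset
      have h2 := Finset.card_erase_of_mem hxmem
      have h3 := Finset.card_pos.mpr ⟨x, hxmem⟩
      omega
    exact ih v' hv' h0' ⟨y, hposy⟩ hcard'

end Aux
section Aux2

/-- The graph of a principal submatrix is isomorphic to the induced subgraph. -/
noncomputable def submatrixGraphIso {m n : ℕ} (A : Matrix (Fin n) (Fin n) ℤ)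
    (f : Fin m → Fin n) (hf : Function.Injective f) :
    gcmGraph (A.submatrix f f) ≃g (gcmGraph A).induce (Set.range f) where
  toEquiv := Equiv.ofInjective f hf
  map_rel_iff' := by
    intro i j
    simp only [Equiv.ofInjective_apply, SimpleGraph.comap_adj, SimpleGraph.induce,
      gcmGraph, Matrix.submatrix_apply, ne_eq, Subtype.mk.injEq]
    constructor
    · rintro ⟨h1, h2⟩
      exact ⟨fun h => h1 (by rw [h]), h2⟩
    · rintro ⟨h1, h2⟩
      exact ⟨fun h => h1 (hf h), h2⟩

lemma indec_submatrix_iff {m n : ℕ} (A : Matrix (Fin n) (Fin n) ℤ)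
    (f : Fin m → Fin n) (hf : Function.Injective f) :
    IsIndecomposable (A.submatrix f f) ↔ ((gcmGraph A).induce (Set.range f)).Connected :=
  (submatrixGraphIso A f hf).connected_iff

lemma exists_boundary_edge {V : Type*} {G : SimpleGraph V} (hG : G.Connected)
    {S : Set V} {a b : V} (ha : a ∈ S) (hb : b ∉ S) :
    ∃ x ∈ S, ∃ y, y ∉ S ∧ G.Adj x y := by
  obtain ⟨w⟩ := hG.preconnected a b
  obtain ⟨d, _, h1, h2⟩ := w.exists_boundary_dart S ha hb
  exact ⟨d.fst, h1, d.snd, h2, d.adj⟩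

lemma induce_insert_connected {V : Type*} {G : SimpleGraph V} {S : Set V}
    (hS : (G.induce S).Connected) {x v : V} (hx : x ∈ S) (hadj : G.Adj x v) :
    (G.induce (insert v S)).Connected := by
  have hS' : S ⊆ insert v S := Set.subset_insert _ _
  rw [SimpleGraph.connected_iff]
  refine ⟨?_, ⟨⟨x, Set.mem_insert_of_mem _ hx⟩⟩⟩
  have key : ∀ c : ↥(insert v S),
      (G.induce (insert v S)).Reachable c ⟨x, Set.mem_insert_of_mem _ hx⟩ := by
    rintro ⟨c, hc⟩
    rcases Set.mem_insert_iff.mp hc with rfl | hc'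
    · refine SimpleGraph.Adj.reachable ?_
      simp only [SimpleGraph.comap_adj, SimpleGraph.induce]
      exact hadj.symm
    · have hreach := hS.preconnected ⟨c, hc'⟩ ⟨x, hx⟩
      exact hreach.map (G.induceHomOfLE hS').toHom
  exact fun a b => (key a).trans (key b).symm

lemma finType_submatrix {m n : ℕ} {A : Matrix (Fin n) (Fin n) ℤ} (hA : IsGCM A)
    {u : Fin n → ℚ} (hu : ∀ i, 0 < u i) (hAu : ∀ i, 0 < ∑ j, (A i j : ℚ) * u j)
    {f : Fin m → Fin n} (hf : Function.Injective f)
    (hconn : IsIndecomposable (A.submatrix f f)) : IsFinType (A.submatrix f f) := by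
  refine ⟨hA.submatrix' hf, hconn, u ∘ f, fun i => hu _, fun i => ?_⟩
  have h1 := restrict_sum_eq A hf u (f i)
  have h2 := compl_sum_nonpos hA hu (f := f) (u := u) i
  have h3 := hAu (f i)
  simp only [Matrix.submatrix_apply, Function.comp]
  linarith

lemma affType_submatrix_fin {m n : ℕ} {A : Matrix (Fin n) (Fin n) ℤ} (hA : IsGCM A)
    (hAconn : IsIndecomposable A) {u : Fin n → ℚ} (hu : ∀ i, 0 < u i)
    (hAu : ∀ i, ∑ j, (A i j : ℚ) * u j = 0) {f : Fin m → Fin n}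
    (hf : Function.Injective f) (hmn : m < n)
    (hconn : IsIndecomposable (A.submatrix f f)) : IsFinType (A.submatrix f f) := by
  have hsum : ∀ i : Fin m, ∑ j, ((A.submatrix f f) i j : ℚ) * (u ∘ f) j
      = -∑ j' ∈ Finset.univ \ Finset.univ.image f, (A (f i) j' : ℚ) * u j' := by
    intro i
    have h1 := restrict_sum_eq A hf u (f i)
    simp only [Matrix.submatrix_apply, Function.comp]
    rw [h1, hAu (f i)]; ring
  refine pf_lemma (hA.submatrix' hf) hconn (v := u ∘ f) (fun i => hu _) (fun i => ?_) ?_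
  · rw [hsum i]
    have := compl_sum_nonpos hA hu (f := f) (u := u) i
    linarith
  · -- find a boundary edge
    obtain ⟨i0⟩ : Nonempty (Fin m) := hconn.nonempty
    obtain ⟨b, hb⟩ : ∃ b : Fin n, b ∉ Set.range f := by
      by_contra h
      push_neg at h
      have : Function.Surjective f := h
      have := Fintype.card_le_of_surjective f this
      simp at this; omega
    obtain ⟨x, hxmem, y, hy, hadj⟩ :=
      exists_boundary_edge hAconn (S := Set.range f) (Set.mem_range_self i0) hb
    obtain ⟨i1, rfl⟩ := hxmem
    refine ⟨i1, ?_⟩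
    rw [hsum i1]
    have hymem : y ∈ Finset.univ \ Finset.univ.image f := by
      simp only [Finset.mem_sdiff, Finset.mem_univ, true_and, Finset.mem_image]
      rintro ⟨j, -, rfl⟩
      exact hy ⟨j, rfl⟩
    have hne : f i1 ≠ y := hadj.1
    have hAxy : A (f i1) y ≠ 0 := by
      rcases hadj.2 with h | h
      · exact h
      · intro h'; exact h (hA.2.2 _ _ h')
    have hterm : (A (f i1) y : ℚ) * u y < 0 := by
      have h1 : (A (f i1) y : ℚ) < 0 := by
        have := hA.2.1 _ _ hne
        exact_mod_cast lt_of_le_of_ne this hAxy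
      exact mul_neg_of_neg_of_pos h1 (hu y)
    have hrest : ∑ j' ∈ (Finset.univ \ Finset.univ.image f).erase y,
        (A (f i1) j' : ℚ) * u j' ≤ 0 := by
      apply Finset.sum_nonpos
      intro j' hj'
      have hj'2 := Finset.mem_of_mem_erase hj'
      have hne' : f i1 ≠ j' := by
        rintro rfl
        simp only [Finset.mem_sdiff, Finset.mem_univ, true_and, Finset.mem_image] at hj'2
        exact hj'2 ⟨i1, rfl⟩
      have h1 : (A (f i1) j' : ℚ) ≤ 0 := by exact_mod_cast hA.2.1 _ _ hne'
      exact mul_nonpos_of_nonpos_of_nonneg h1 (hu j').le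
    have hsplit : (∑ j' ∈ (Finset.univ \ Finset.univ.image f).erase y,
        (A (f i1) j' : ℚ) * u j') + (A (f i1) y : ℚ) * u y
        = ∑ j' ∈ Finset.univ \ Finset.univ.image f, (A (f i1) j' : ℚ) * u j' :=
      Finset.sum_erase_add (Finset.univ \ Finset.univ.image f)
        (fun j' => (A (f i1) j' : ℚ) * u j') hymem
    linarith

lemma submatrix_factor {m p n : ℕ} {f : Fin m → Fin n} (hf : StrictMono f)
    {t : Finset (Fin n)} (ht : t.card = p) (hft : ∀ i, f i ∈ t) :
    ∃ g : Fin m → Fin p, StrictMono g ∧ ∀ i, t.orderEmbOfFin ht (g i) = f i := by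
  refine ⟨fun i => (t.orderIsoOfFin ht).symm ⟨f i, hft i⟩, ?_, ?_⟩
  · intro i j hij
    exact (t.orderIsoOfFin ht).symm.strictMono (Subtype.mk_lt_mk.mpr (hf hij))
  · intro i
    have h := (t.orderIsoOfFin ht).apply_symm_apply ⟨f i, hft i⟩
    have h2 := Finset.coe_orderIsoOfFin_apply t ht ((t.orderIsoOfFin ht).symm ⟨f i, hft i⟩)
    rw [← h2, h]

end Aux2
section Aux3

lemma IsNType.indec {k n : ℕ} {A : Matrix (Fin n) (Fin n) ℤ} (h : IsNType k A) :
    IsIndecomposable A := by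
  match k with
  | 0 => simp only [IsNType] at h; exact h.2.1
  | 1 => simp only [IsNType] at h; exact h.2.1
  | 2 => simp only [IsNType] at h; exact h.2.1
  | (j + 3) => simp only [IsNType] at h; exact h.2.1

lemma step_down {p q : ℕ} {C : Matrix (Fin p) (Fin p) ℤ} {B : Matrix (Fin q) (Fin q) ℤ}
    {j : ℕ} (hC : IsNType j C) (hBC : IsProperPrincipalSubmatrix B C)
    (hBconn : IsIndecomposable B) : ∃ j', IsNType j' B ∧ (j' = 0 ∨ j' + 1 ≤ j) := by
  match j with
  | 0 =>
    simp only [IsNType] at hC ⊢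
    obtain ⟨hCg, hCc, u, hu, hAu⟩ := hC
    obtain ⟨⟨f, hfmono, rfl⟩, h0, hpq⟩ := hBC
    refine ⟨0, ?_, Or.inl rfl⟩
    simp only [IsNType]
    exact finType_submatrix hCg hu hAu hfmono.injective hBconn
  | 1 =>
    simp only [IsNType] at hC ⊢
    obtain ⟨hCg, hCc, u, hu, hAu⟩ := hC
    obtain ⟨⟨f, hfmono, rfl⟩, h0, hpq⟩ := hBC
    refine ⟨0, ?_, Or.inl rfl⟩
    simp only [IsNType]
    exact affType_submatrix_fin hCg hCc hu hAu hfmono.injective hpq hBconn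
  | 2 =>
    simp only [IsNType] at hC
    rcases hC.2.2.2.2 _ B hBC hBconn with h | h
    · refine ⟨0, ?_, Or.inl rfl⟩
      simp only [IsNType]; exact h
    · refine ⟨1, ?_, Or.inr (by omega)⟩
      simp only [IsNType]; exact h
  | (j'' + 3) =>
    simp only [IsNType] at hC
    obtain ⟨m', hm', hN⟩ := hC.2.2.2 _ B hBC hBconn
    exact ⟨m', hN, Or.inr hm'⟩

lemma indec_pos {q : ℕ} {B : Matrix (Fin q) (Fin q) ℤ} (h : IsIndecomposable B) : 0 < q := by
  obtain ⟨i⟩ := h.nonempty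
  exact i.pos

lemma chain {k n : ℕ} {A : Matrix (Fin n) (Fin n) ℤ} (hN : IsNType k A) :
    ∀ c m, 1 ≤ c → m + c = n → ∀ B : Matrix (Fin m) (Fin m) ℤ,
      IsPrincipalSubmatrix B A → IsIndecomposable B →
      ∃ j, IsNType j B ∧ (j = 0 ∨ j + c ≤ k) := by
  intro c
  induction c with
  | zero => intro m h1; omega
  | succ c ih =>
    intro m _ hm B hBA hBconn
    have hmpos : 0 < m := indec_pos hBconn
    rcases Nat.eq_zero_or_pos c with rfl | hc1
    · -- base case: codimension 1
      have hprop : IsProperPrincipalSubmatrix B A := ⟨hBA, hmpos, by omega⟩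
      obtain ⟨j, hj, hj'⟩ := step_down hN hprop hBconn
      exact ⟨j, hj, by omega⟩
    · -- inductive step: find an intermediate connected submatrix C of dimension m+1
      obtain ⟨f, hf, rfl⟩ := hBA
      set s := Finset.univ.image f with hsdef
      have hscard : s.card = m := by
        rw [hsdef, Finset.card_image_of_injective _ hf.injective, Finset.card_univ,
          Fintype.card_fin]
      have hAconn : IsIndecomposable A := hN.indec
      have hrange : Set.range f = ↑s := by
        rw [hsdef]; simp
      have hindS : ((gcmGraph A).induce ↑s).Connected := by
        rw [← hrange, ← indec_submatrix_iff A f hf.injective]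
        exact hBconn
      -- boundary edge from s
      have ha : f ⟨0, hmpos⟩ ∈ (↑s : Set (Fin n)) := by
        rw [← hrange]; exact Set.mem_range_self _
      obtain ⟨b, hb⟩ : ∃ b : Fin n, b ∉ (↑s : Set (Fin n)) := by
        by_contra h
        push_neg at h
        have hsub : Finset.univ ⊆ s := fun y _ => h y
        have := Finset.card_le_card hsub
        simp only [Finset.card_univ, Fintype.card_fin, hscard] at this
        omega
      obtain ⟨x, hxmem, v, hv, hadj⟩ := exists_boundary_edge hAconn ha hb
      -- build the supermatrix C on t = insert v s
      have hvs : v ∉ s := fun h => hv (Finset.mem_coe.mpr h)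
      set t := insert v s with htdef
      have htcard : t.card = m + 1 := by
        rw [htdef, Finset.card_insert_of_notMem hvs, hscard]
      set F : Fin (m + 1) → Fin n := ⇑(t.orderEmbOfFin htcard) with hFdef
      have hFmono : StrictMono F := (t.orderEmbOfFin htcard).strictMono
      set C := A.submatrix F F with hCdef
      have hCsub : IsPrincipalSubmatrix C A := ⟨F, hFmono, rfl⟩
      have hCconn : IsIndecomposable C := by
        rw [hCdef, indec_submatrix_iff A F hFmono.injective]
        have hrangeF : Set.range F = ↑t := by
          rw [hFdef]; exact t.range_orderEmbOfFin htcard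
        rw [hrangeF, htdef, Finset.coe_insert]
        exact induce_insert_connected hindS hxmem hadj
      obtain ⟨j, hNj, hj⟩ := ih (m + 1) hc1 (by omega) C hCsub hCconn
      -- B is a proper principal submatrix of C
      have hft : ∀ i, f i ∈ t := fun i => by
        rw [htdef]
        exact Finset.mem_insert_of_mem (Finset.mem_image_of_mem f (Finset.mem_univ i))
      obtain ⟨g, hg, hgF⟩ := submatrix_factor hf htcard hft
      have hBeq : A.submatrix f f = C.submatrix g g := by
        ext i' j'
        simp only [hCdef, Matrix.submatrix_apply, hFdef, hgF]
      have hBC : IsProperPrincipalSubmatrix (A.submatrix f f) C :=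
        ⟨⟨g, hg, hBeq⟩, hmpos, by omega⟩
      obtain ⟨j', hNj', hj'⟩ := step_down hNj hBC hBconn
      refine ⟨j', hNj', ?_⟩
      rcases hj' with h | h
      · exact Or.inl h
      · rcases hj with h2 | h2 <;> omega
end Aux3

/-- Corollary 3.2 of the paper: for a GCM of type `N_{k,k+a}`
with `k ≥ 2` and `a ≥ 1`, every (connected) principal submatrix of dimension
smaller than `a + 1` is of finite type, and every principal submatrix of
hyperbolic (`N₂`) type has dimension at least `a + 2`. -/
theorem small_submatrices_finite_of_isNType {k a : ℕ} (hk : 2 ≤ k) (ha : 1 ≤ a)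
    {A : Matrix (Fin (k + a)) (Fin (k + a)) ℤ} (hA : IsGCM A) (hN : IsNType k A) :
    (∀ m, m < a + 1 → ∀ B : Matrix (Fin m) (Fin m) ℤ,
      IsPrincipalSubmatrix B A → IsIndecomposable B → IsFinType B) ∧
    (∀ m, ∀ B : Matrix (Fin m) (Fin m) ℤ,
      IsPrincipalSubmatrix B A → IsHypType B → a + 2 ≤ m) := by
  constructor
  · intro m hma B hBA hBconn
    have hmpos : 0 < m := indec_pos hBconn
    obtain ⟨j, hj, hj'⟩ := chain hN (k + a - m) m (by omega) (by omega) B hBA hBconn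
    have hj0 : j = 0 := by rcases hj' with h | h <;> omega
    subst hj0
    simpa only [IsNType] using hj
  · intro m B hBA hhyp
    have hBconn : IsIndecomposable B := hhyp.2.1
    have hmpos : 0 < m := indec_pos hBconn
    have hmn : m ≤ k + a := by
      obtain ⟨f, hf, -⟩ := hBA
      have := Fintype.card_le_of_injective f hf.injective
      simpa using this
    by_contra hcon
    push_neg at hcon
    rcases eq_or_lt_of_le hmn with heq | hlt
    · omega
    · obtain ⟨j, hj, hj'⟩ := chain hN (k + a - m) m (by omega) (by omega) B hBA hBconn
      have hj1 : j = 0 ∨ j = 1 := by rcases hj' with h | h <;> omega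
      rcases hj1 with rfl | rfl
      · simp only [IsNType] at hj; exact hhyp.2.2.1 hj
      · simp only [IsNType] at hj; exact hhyp.2.2.2.1 hj
end
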